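/- Criterion for containing a copy of Łₙ: let n ≥ 1 and let A be an MV-algebra, and for k ∈ ℕ and x ∈ A define k·x by 0·x = 0 and (k+1)·x = x ⊕ (k·x). Then there exists an embedding of MV-algebras from Łₙ into A if and only if there exists a ∈ A with a ≠ ¬0 and (n−1)·(¬a) = a. -/

import Mathlib

universe u v

/-- An MV-algebra: operations ⊕, ¬, 0 satisfying MV1–MV6. -/
structure MVAlgebra (A : Type u) where
  oplus : A → A → A
  neg : A → A
  zero : A
  mv1 : ∀ x y z, oplus (oplus x y) z = oplus x (oplus y z)
  mv2 : ∀ x y, oplus x y = oplus y x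
  mv3 : ∀ x, oplus x zero = x
  mv4 : ∀ x, neg (neg x) = x
  mv5 : ∀ x, oplus x (neg zero) = neg zero
  mv6 : ∀ x y, oplus (neg (oplus (neg x) y)) y = oplus (neg (oplus x (neg y))) x

/-- The carrier of the Łukasiewicz chain Łₙ : {k/n : k ∈ ℕ, 0 ≤ k ≤ n} ⊆ ℚ. -/
abbrev Luk (n : ℕ+) : Type := {x : ℚ // ∃ k : ℕ, k ≤ (n : ℕ) ∧ x = (k : ℚ) / (n : ℕ)}

/-- The constant 0 of Łₙ. -/
def lukZero (n : ℕ+) : Luk n := ⟨0, 0, Nat.zero_le _, by simp⟩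

/-- The negation ¬x = 1 - x of Łₙ. -/
def lukNeg {n : ℕ+} (x : Luk n) : Luk n :=
  ⟨1 - x.1, by
    obtain ⟨k, hk, hx⟩ := x.2
    refine ⟨(n : ℕ) - k, Nat.sub_le _ _, ?_⟩
    have hn : ((n : ℕ) : ℚ) ≠ 0 := by exact_mod_cast n.pos.ne'
    rw [hx, Nat.cast_sub hk, sub_div, div_self hn]⟩

/-- The truncated sum x ⊕ y = min 1 (x + y) of Łₙ. -/
def lukOplus {n : ℕ+} (x y : Luk n) : Luk n :=
  ⟨min 1 (x.1 + y.1), by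
    obtain ⟨k, hk, hx⟩ := x.2
    obtain ⟨j, hj, hy⟩ := y.2
    refine ⟨min (n : ℕ) (k + j), min_le_left _ _, ?_⟩
    have hn : (0 : ℚ) < ((n : ℕ) : ℚ) := by exact_mod_cast n.pos
    rw [hx, hy, ← add_div]
    rcases le_total (k + j) (n : ℕ) with h | h
    · rw [min_eq_right h, min_eq_right]
      · push_cast; ring_nf
      · rw [div_le_one hn]; exact_mod_cast h
    · rw [min_eq_left h, min_eq_left, div_self hn.ne']
      · rw [one_le_div hn]; exact_mod_cast h⟩

/-- k·x in an MV-algebra: 0·x = 0 and (k+1)·x = x ⊕ k·x. -/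
def MVAlgebra.nsmul {A : Type u} (M : MVAlgebra A) : ℕ → A → A
  | 0, _ => M.zero
  | k + 1, x => M.oplus x (M.nsmul k x)

namespace MVAlgebra

variable {A : Type u} (M : MVAlgebra A)

theorem one_oplus (x : A) : M.oplus (M.neg M.zero) x = M.neg M.zero := by
  rw [M.mv2]; exact M.mv5 x

theorem zero_oplus (x : A) : M.oplus M.zero x = x := by
  rw [M.mv2]; exact M.mv3 x

theorem neg_oplus_self (x : A) : M.oplus (M.neg x) x = M.neg M.zero := by
  have h := M.mv6 (M.neg M.zero) x
  rw [M.mv4, M.zero_oplus, M.one_oplus, M.mv4, M.zero_oplus] at h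
  exact h

theorem nsmul_succ (k : ℕ) (x : A) :
    M.nsmul (k + 1) x = M.oplus x (M.nsmul k x) := rfl

theorem nsmul_add (i j : ℕ) (x : A) :
    M.nsmul (i + j) x = M.oplus (M.nsmul i x) (M.nsmul j x) := by
  induction i with
  | zero => simp [MVAlgebra.nsmul, M.zero_oplus]
  | succ i ih =>
    have h : i + 1 + j = (i + j) + 1 := by omega
    rw [h, M.nsmul_succ, ih, M.nsmul_succ, M.mv1]

theorem nsmul_n (n : ℕ) (hn : 1 ≤ n) (b : A)
    (hb : M.nsmul (n - 1) b = M.neg b) : M.nsmul n b = M.neg M.zero := by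
  have h : n = (n - 1) + 1 := by omega
  rw [h, M.nsmul_succ, hb, M.mv2, M.neg_oplus_self]

theorem nsmul_top (n m : ℕ) (b : A) (h1 : M.nsmul n b = M.neg M.zero)
    (h : n ≤ m) : M.nsmul m b = M.neg M.zero := by
  have hm : m = n + (m - n) := by omega
  rw [hm, M.nsmul_add, h1, M.one_oplus]

theorem neg_nsmul_aux (n : ℕ) (hn : 1 ≤ n) (b : A)
    (hb : M.nsmul (n - 1) b = M.neg b) :
    ∀ j, j ≤ n → M.neg (M.nsmul (n - j) b) = M.nsmul j b := by
  intro j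
  induction j with
  | zero =>
    intro _
    simp only [Nat.sub_zero]
    rw [M.nsmul_n n hn b hb, M.mv4]
    rfl
  | succ j ih =>
    intro hj
    set k := n - (j + 1) with hkdef
    have hk1 : k + 1 = n - j := by omega
    have ihk : M.neg (M.nsmul (k + 1) b) = M.nsmul j b := by
      rw [hk1]; exact ih (by omega)
    have h6 := M.mv6 (M.neg (M.nsmul k b)) b
    rw [M.mv4] at h6
    have e1 : M.oplus (M.nsmul k b) b = M.nsmul (k + 1) b := by
      rw [M.nsmul_succ, M.mv2]
    have e2 : M.oplus (M.neg (M.nsmul k b)) (M.neg b) = M.neg M.zero := by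
      rw [← hb]
      have hs : n - 1 = k + j := by omega
      rw [hs, M.nsmul_add, ← M.mv1, M.neg_oplus_self, M.one_oplus]
    rw [e1, ihk, e2, M.mv4, M.zero_oplus] at h6
    have : M.oplus (M.nsmul j b) b = M.nsmul (j + 1) b := by
      rw [M.nsmul_succ, M.mv2]
    rw [this] at h6
    exact h6.symm

theorem neg_nsmul (n : ℕ) (hn : 1 ≤ n) (b : A)
    (hb : M.nsmul (n - 1) b = M.neg b) :
    ∀ k, k ≤ n → M.neg (M.nsmul k b) = M.nsmul (n - k) b := by
  intro k hk
  have h := M.neg_nsmul_aux n hn b hb (n - k) (by omega)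
  have hnk : n - (n - k) = k := by omega
  rw [hnk] at h
  exact h

end MVAlgebra

section LukAux

theorem luk_val_inj (n : ℕ+) {k j : ℕ}
    (h : (k : ℚ) / ((n : ℕ) : ℚ) = (j : ℚ) / ((n : ℕ) : ℚ)) : k = j := by
  have hn : ((n : ℕ) : ℚ) ≠ 0 := by exact_mod_cast n.pos.ne'
  have h2 : (k : ℚ) = (j : ℚ) := by
    field_simp at h
    exact_mod_cast h
  exact_mod_cast h2

theorem luk_min_val (n : ℕ+) (k j : ℕ) :
    min 1 ((k : ℚ) / ((n : ℕ) : ℚ) + (j : ℚ) / ((n : ℕ) : ℚ)) =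
      ((min (n : ℕ) (k + j) : ℕ) : ℚ) / ((n : ℕ) : ℚ) := by
  have hn : (0 : ℚ) < ((n : ℕ) : ℚ) := by exact_mod_cast n.pos
  rw [← add_div]
  rcases le_total (k + j) (n : ℕ) with h | h
  · rw [min_eq_right h, min_eq_right]
    · push_cast; ring_nf
    · rw [div_le_one hn]; exact_mod_cast h
  · rw [min_eq_left h, min_eq_left, div_self hn.ne']
    rw [one_le_div hn]; exact_mod_cast h

/-- The element k/n of Łₙ. -/
def mkLuk (n : ℕ+) (k : ℕ) (hk : k ≤ (n : ℕ)) : Luk n :=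
  ⟨(k : ℚ) / ((n : ℕ) : ℚ), k, hk, rfl⟩

/-- The canonical numerator of an element of Łₙ. -/
def kOf (n : ℕ+) (x : Luk n) : ℕ := (x.1 * ((n : ℕ) : ℚ)).num.toNat

theorem kOf_eq (n : ℕ+) (x : Luk n) (k : ℕ)
    (h : x.1 = (k : ℚ) / ((n : ℕ) : ℚ)) : kOf n x = k := by
  have hn : ((n : ℕ) : ℚ) ≠ 0 := by exact_mod_cast n.pos.ne'
  unfold kOf
  rw [h, div_mul_cancel₀ _ hn]
  simp

end LukAux

/-- Łₙ embeds into an MV-algebra A iff A has an element a ≠ ¬0 = 1 with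
(n-1)·(¬a) = a. -/
theorem luk_embeds_iff_element (n : ℕ+) {A : Type u} (M : MVAlgebra A) :
    (∃ f : Luk n → A, Function.Injective f ∧
        (∀ x y, f (lukOplus x y) = M.oplus (f x) (f y)) ∧
        (∀ x, f (lukNeg x) = M.neg (f x)) ∧
        f (lukZero n) = M.zero) ↔
      ∃ a : A, a ≠ M.neg M.zero ∧ M.nsmul ((n : ℕ) - 1) (M.neg a) = a := by
  have hone : 1 ≤ (n : ℕ) := n.one_le
  have hn1 : (n : ℕ) - 1 ≤ (n : ℕ) := Nat.sub_le _ _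
  have hnpos : (0 : ℚ) < ((n : ℕ) : ℚ) := by exact_mod_cast n.pos
  constructor
  · rintro ⟨f, hinj, hop, hng, hz⟩
    refine ⟨f (mkLuk n ((n : ℕ) - 1) hn1), ?_, ?_⟩
    · intro hcon
      have h1 : M.neg M.zero = f (lukNeg (lukZero n)) := by rw [hng, hz]
      rw [h1] at hcon
      have h2 := hinj hcon
      have hval : (((n : ℕ) - 1 : ℕ) : ℚ) / ((n : ℕ) : ℚ) = 1 - 0 :=
        congrArg Subtype.val h2
      rw [sub_zero, div_eq_one_iff_eq hnpos.ne'] at hval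
      have : ((n : ℕ) - 1 : ℕ) = (n : ℕ) := by exact_mod_cast hval
      omega
    · have hnegmk : lukNeg (mkLuk n ((n : ℕ) - 1) hn1) = mkLuk n 1 hone := by
        apply Subtype.ext
        show 1 - (((n : ℕ) - 1 : ℕ) : ℚ) / ((n : ℕ) : ℚ) = (1 : ℕ) / ((n : ℕ) : ℚ)
        rw [Nat.cast_sub hone]
        field_simp
        push_cast; ring
      have key : ∀ k (hk : k ≤ (n : ℕ)),
          M.nsmul k (f (mkLuk n 1 hone)) = f (mkLuk n k hk) := by
        intro k
        induction k with
        | zero =>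
          intro hk
          show M.zero = _
          rw [← hz]
          congr 1
          apply Subtype.ext
          show (0 : ℚ) = ((0 : ℕ) : ℚ) / ((n : ℕ) : ℚ)
          simp
        | succ k ih =>
          intro hk
          have hk' : k ≤ (n : ℕ) := by omega
          rw [M.nsmul_succ, ih hk', ← hop]
          congr 1
          apply Subtype.ext
          show min 1 (((1 : ℕ) : ℚ) / ((n : ℕ) : ℚ) + (k : ℚ) / ((n : ℕ) : ℚ))
              = ((k + 1 : ℕ) : ℚ) / ((n : ℕ) : ℚ)
          rw [luk_min_val n 1 k, min_eq_right (by omega : 1 + k ≤ (n : ℕ))]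
          have h1k : 1 + k = k + 1 := by omega
          rw [h1k]
      rw [← hng, hnegmk]
      exact key _ hn1
  · rintro ⟨a, ha, hsum⟩
    set b := M.neg a with hbdef
    have hb : M.nsmul ((n : ℕ) - 1) b = M.neg b := by
      rw [hsum, hbdef, M.mv4]
    have hnb : M.nsmul (n : ℕ) b = M.neg M.zero := M.nsmul_n _ hone b hb
    have hneg : ∀ k, k ≤ (n : ℕ) →
        M.neg (M.nsmul k b) = M.nsmul ((n : ℕ) - k) b := M.neg_nsmul _ hone b hb
    have hdist : ∀ k j, k < j → j ≤ (n : ℕ) → M.nsmul k b ≠ M.nsmul j b := by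
      intro k j hkj hj heq
      apply ha
      have h1 : M.oplus (M.neg (M.nsmul j b)) (M.nsmul k b) = M.neg M.zero := by
        rw [heq, M.neg_oplus_self]
      rw [hneg j hj, ← M.nsmul_add] at h1
      have h2 : M.nsmul ((n : ℕ) - 1) b = M.neg M.zero :=
        M.nsmul_top _ _ b h1 (by omega)
      rw [← hsum]
      exact h2
    refine ⟨fun x => M.nsmul (kOf n x) b, ?_, ?_, ?_, ?_⟩
    · intro x y h
      dsimp only at h
      obtain ⟨kx, hkx, hxv⟩ := x.2
      obtain ⟨ky, hky, hyv⟩ := y.2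
      have ex : kOf n x = kx := kOf_eq n x kx hxv
      have ey : kOf n y = ky := kOf_eq n y ky hyv
      rw [ex, ey] at h
      have hcc : kx = ky := by
        by_contra hne
        rcases Nat.lt_or_ge kx ky with hlt | hge
        · exact hdist _ _ hlt hky h
        · have hlt : ky < kx := by omega
          exact hdist _ _ hlt hkx h.symm
      apply Subtype.ext
      rw [hxv, hyv, hcc]
    · intro x y
      dsimp only
      obtain ⟨kx, hkx, hxv⟩ := x.2
      obtain ⟨ky, hky, hyv⟩ := y.2
      have ex : kOf n x = kx := kOf_eq n x kx hxv
      have ey : kOf n y = ky := kOf_eq n y ky hyv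
      have ec : kOf n (lukOplus x y) = min (n : ℕ) (kx + ky) := by
        apply kOf_eq
        show min 1 (x.1 + y.1) = _
        rw [hxv, hyv, luk_min_val]
      rw [ex, ey, ec]
      rcases le_total (kx + ky) (n : ℕ) with h | h
      · rw [min_eq_right h, M.nsmul_add]
      · rw [min_eq_left h, hnb, ← M.nsmul_add]
        exact (M.nsmul_top _ _ b hnb h).symm
    · intro x
      dsimp only
      obtain ⟨kx, hkx, hxv⟩ := x.2
      have ex : kOf n x = kx := kOf_eq n x kx hxv
      have ec : kOf n (lukNeg x) = (n : ℕ) - kx := by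
        apply kOf_eq
        show 1 - x.1 = _
        rw [hxv, Nat.cast_sub hkx, sub_div, div_self hnpos.ne']
      rw [ex, ec, ← hneg _ hkx]
    · dsimp only
      have ec : kOf n (lukZero n) = 0 := by
        apply kOf_eq
        show (0 : ℚ) = _
        simp
      rw [ec]
      rfl
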